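/- Suppose X(τ), τ ∈ [0,T], is a real-valued continuous stochastic process such that for every δ > 0 and every ν in a family, E ∫₀^T 1_{{X^ν(τ) ≤ δ}} dτ ≤ Cδ with C independent of ν, and suppose X^ν converges in distribution in C([0,T],ℝ) to a process X⁰. Then E ∫₀^T 1_{{X⁰(τ) ≤ δ}} dτ ≤ Cδ for all δ > 0, and in particular E ∫₀^T 1_{{X⁰(τ) ≤ δ}} dτ → 0 as δ → 0. -/

import Mathlib

open MeasureTheory Filter

attribute [local instance] MeasureTheory.Measure.Subtype.measureSpace

/-- The occupation time `∫₀^T 1_{x(τ) ≤ δ} dτ` of a continuous path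
`x : [0,T] → ℝ` below level `δ`. -/
noncomputable def occupation (T δ : ℝ) (x : C(Set.Icc (0:ℝ) T, ℝ)) : ℝ :=
  ∫ τ : Set.Icc (0:ℝ) T, (if x τ ≤ δ then (1:ℝ) else 0)

lemma occupation_vol_univ (T : ℝ) :
    (volume : Measure (Set.Icc (0:ℝ) T)) Set.univ = ENNReal.ofReal T := by
  rw [MeasureTheory.Measure.Subtype.volume_univ measurableSet_Icc.nullMeasurableSet,
    Real.volume_Icc, sub_zero]

instance occupation_finiteMeasure (T : ℝ) :
    IsFiniteMeasure (volume : Measure (Set.Icc (0:ℝ) T)) :=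
  ⟨by rw [occupation_vol_univ]; exact ENNReal.ofReal_lt_top⟩

lemma occupation_stronglyMeasurable (T δ : ℝ)
    [MeasurableSpace C(Set.Icc (0:ℝ) T, ℝ)] [BorelSpace C(Set.Icc (0:ℝ) T, ℝ)] :
    StronglyMeasurable (occupation T δ) := by
  have hS : MeasurableSet {p : C(Set.Icc (0:ℝ) T, ℝ) × Set.Icc (0:ℝ) T | p.1 p.2 ≤ δ} :=
    (measurableSet_Iic (a := δ)).preimage (by fun_prop)
  have : StronglyMeasurable
      (fun p : C(Set.Icc (0:ℝ) T, ℝ) × Set.Icc (0:ℝ) T => if p.1 p.2 ≤ δ then (1:ℝ) else 0) :=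
    (Measurable.ite hS measurable_const measurable_const).stronglyMeasurable
  exact this.integral_prod_right'

/-- If continuous processes `X^ν` (represented by their laws `μ ν` on
`C([0,T],ℝ)`) satisfy `E ∫₀^T 1_{X^ν ≤ δ} dτ ≤ Cδ` uniformly in `ν`, and
converge in distribution to `X⁰` (law `μ0`), then
`E ∫₀^T 1_{X⁰ ≤ δ} dτ ≤ Cδ` for every `δ > 0`; in particular this expectation
tends to `0` as `δ → 0⁺`. -/
theorem occupation_bound_in_the_limit (T C : ℝ) (hT : 0 < T)
    [MeasurableSpace C(Set.Icc (0:ℝ) T, ℝ)] [BorelSpace C(Set.Icc (0:ℝ) T, ℝ)]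
    (μ : ℕ → ProbabilityMeasure C(Set.Icc (0:ℝ) T, ℝ))
    (μ0 : ProbabilityMeasure C(Set.Icc (0:ℝ) T, ℝ))
    (hconv : Tendsto μ atTop (nhds μ0))
    (hbound : ∀ δ > (0:ℝ), ∀ n, ∫ x, occupation T δ x ∂(μ n : Measure _) ≤ C * δ) :
    (∀ δ > (0:ℝ), ∫ x, occupation T δ x ∂(μ0 : Measure _) ≤ C * δ)
    ∧ Tendsto (fun δ : ℝ => ∫ x, occupation T δ x ∂(μ0 : Measure _))
        (nhdsWithin 0 (Set.Ioi 0)) (nhds 0) := by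
  have hT' : (0:ℝ) ≤ T := hT.le
  -- integral of the constant 1 over the time interval
  have int_one : (∫ _τ : Set.Icc (0:ℝ) T, (1:ℝ)) = T := by
    rw [integral_const, measureReal_def, occupation_vol_univ, ENNReal.toReal_ofReal hT', smul_eq_mul, mul_one]
  -- integrability of the indicator in time
  have ind_int : ∀ (δ : ℝ) (x : C(Set.Icc (0:ℝ) T, ℝ)),
      Integrable (fun τ : Set.Icc (0:ℝ) T => if x τ ≤ δ then (1:ℝ) else 0) volume := by
    intro δ x
    refine (integrable_const (1:ℝ)).mono'
      ((Measurable.ite ((measurableSet_Iic (a := δ)).preimage x.continuous.measurable)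
        measurable_const measurable_const).aestronglyMeasurable)
      (Eventually.of_forall fun τ => ?_)
    split <;> simp
  have occ_nonneg : ∀ (δ : ℝ) (x : C(Set.Icc (0:ℝ) T, ℝ)), 0 ≤ occupation T δ x := by
    intro δ x
    refine integral_nonneg fun τ => ?_
    split <;> norm_num
  have occ_le_T : ∀ (δ : ℝ) (x : C(Set.Icc (0:ℝ) T, ℝ)), occupation T δ x ≤ T := by
    intro δ x
    have : occupation T δ x ≤ ∫ _τ : Set.Icc (0:ℝ) T, (1:ℝ) := by
      refine integral_mono (ind_int δ x) (integrable_const 1) fun τ => ?_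
      split <;> norm_num
    simpa [int_one] using this
  -- integrability of occupation w.r.t. any probability measure
  have occ_int : ∀ (δ : ℝ) (P : ProbabilityMeasure C(Set.Icc (0:ℝ) T, ℝ)),
      Integrable (occupation T δ) (P : Measure _) := by
    intro δ P
    refine (integrable_const T).mono'
      (occupation_stronglyMeasurable T δ).aestronglyMeasurable
      (Eventually.of_forall fun x => ?_)
    rw [Real.norm_eq_abs, abs_of_nonneg (occ_nonneg δ x)]
    exact occ_le_T δ x
  -- main bound
  have main : ∀ δ > (0:ℝ), ∫ x, occupation T δ x ∂(μ0 : Measure _) ≤ C * δ := by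
    intro δ hδ
    have key : ∀ δ' : ℝ, δ < δ' → ∫ x, occupation T δ x ∂(μ0 : Measure _) ≤ C * δ' := by
      intro δ' hδ'
      have hpos : 0 < δ' - δ := sub_pos.mpr hδ'
      set g : ℝ → ℝ := fun t => min 1 (max ((δ' - t) / (δ' - δ)) 0) with hg
      have g_nonneg : ∀ t, 0 ≤ g t := fun t => le_min zero_le_one (le_max_right _ _)
      have g_le_one : ∀ t, g t ≤ 1 := fun t => min_le_left _ _
      have g_one : ∀ t, t ≤ δ → g t = 1 := by
        intro t ht
        have h1 : (1:ℝ) ≤ (δ' - t) / (δ' - δ) := by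
          rw [le_div_iff₀ hpos, one_mul]
          linarith
        simp only [hg]
        rw [min_eq_left (le_max_of_le_left h1)]
      have g_zero : ∀ t, δ' < t → g t = 0 := by
        intro t ht
        have h1 : (δ' - t) / (δ' - δ) ≤ 0 := div_nonpos_of_nonpos_of_nonneg (by linarith) hpos.le
        simp only [hg]
        rw [max_eq_right h1, min_eq_right zero_le_one]
      have g_lip : ∀ s t : ℝ, |g s - g t| ≤ |s - t| / (δ' - δ) := by
        intro s t
        have h1 : |g s - g t| ≤ max |(1:ℝ) - 1| |max ((δ' - s) / (δ' - δ)) 0 - max ((δ' - t) / (δ' - δ)) 0| :=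
          abs_min_sub_min_le_max _ _ _ _
        have h2 : |max ((δ' - s) / (δ' - δ)) 0 - max ((δ' - t) / (δ' - δ)) 0|
            ≤ |(δ' - s) / (δ' - δ) - (δ' - t) / (δ' - δ)| := abs_max_sub_max_le_abs _ _ _
        have h3 : |(δ' - s) / (δ' - δ) - (δ' - t) / (δ' - δ)| = |s - t| / (δ' - δ) := by
          rw [div_sub_div_same, abs_div, abs_of_pos hpos]
          congr 1
          rw [show δ' - s - (δ' - t) = -(s - t) by ring, abs_neg]
        calc |g s - g t| ≤ max |(1:ℝ) - 1| _ := h1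
          _ = |max ((δ' - s) / (δ' - δ)) 0 - max ((δ' - t) / (δ' - δ)) 0| := by
              rw [sub_self, abs_zero]; exact max_eq_right (abs_nonneg _)
          _ ≤ |(δ' - s) / (δ' - δ) - (δ' - t) / (δ' - δ)| := h2
          _ = |s - t| / (δ' - δ) := h3
      have g_cont : Continuous g :=
        continuous_const.min (((continuous_const.sub continuous_id).div_const _).max continuous_const)
      -- integrability of g ∘ x in time
      have g_int : ∀ x : C(Set.Icc (0:ℝ) T, ℝ),
          Integrable (fun τ : Set.Icc (0:ℝ) T => g (x τ)) volume := by
        intro x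
        refine (integrable_const (1:ℝ)).mono'
          ((g_cont.comp x.continuous).aestronglyMeasurable)
          (Eventually.of_forall fun τ => ?_)
        rw [Real.norm_eq_abs, abs_of_nonneg (g_nonneg _)]
        exact g_le_one _
      -- the test functional
      set f : C(Set.Icc (0:ℝ) T, ℝ) → ℝ := fun x => ∫ τ : Set.Icc (0:ℝ) T, g (x τ) with hf
      have f_bound : ∀ x, |f x| ≤ T := by
        intro x
        rw [abs_of_nonneg (integral_nonneg fun τ => g_nonneg _)]
        have : f x ≤ ∫ _τ : Set.Icc (0:ℝ) T, (1:ℝ) :=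
          integral_mono (g_int x) (integrable_const 1) fun τ => g_le_one _
        simpa [int_one] using this
      have f_lip : ∀ x y, dist (f x) (f y) ≤ (T / (δ' - δ)) * dist x y := by
        intro x y
        rw [Real.dist_eq, hf]
        have hsub : f x - f y = ∫ τ : Set.Icc (0:ℝ) T, (g (x τ) - g (y τ)) :=
          (integral_sub (g_int x) (g_int y)).symm
        calc |(∫ τ : Set.Icc (0:ℝ) T, g (x τ)) - ∫ τ : Set.Icc (0:ℝ) T, g (y τ)|
            = |∫ τ : Set.Icc (0:ℝ) T, (g (x τ) - g (y τ))| := by rw [← hsub]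
          _ ≤ ∫ τ : Set.Icc (0:ℝ) T, |g (x τ) - g (y τ)| := by
              simpa [Real.norm_eq_abs] using
                norm_integral_le_integral_norm (fun τ : Set.Icc (0:ℝ) T => g (x τ) - g (y τ))
          _ ≤ ∫ _τ : Set.Icc (0:ℝ) T, dist x y / (δ' - δ) := by
              refine integral_mono ((g_int x).sub (g_int y)).abs (integrable_const _) fun τ => ?_
              refine (g_lip _ _).trans ?_
              refine div_le_div_of_nonneg_right ?_ hpos.le
              simpa [Real.dist_eq] using (ContinuousMap.dist_apply_le_dist (f := x) (g := y) τ)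
          _ = (T / (δ' - δ)) * dist x y := by
              rw [integral_const, measureReal_def, occupation_vol_univ, ENNReal.toReal_ofReal hT',
                smul_eq_mul]
              ring
      have f_cont : Continuous f := by
        have : LipschitzWith ⟨T / (δ' - δ), by positivity⟩ f :=
          LipschitzWith.of_dist_le_mul (by exact_mod_cast f_lip)
        exact this.continuous
      set F : BoundedContinuousFunction C(Set.Icc (0:ℝ) T, ℝ) ℝ :=
        BoundedContinuousFunction.mkOfBound ⟨f, f_cont⟩ (2 * T)
          (fun x y => by
            calc dist (f x) (f y) ≤ ‖f x‖ + ‖f y‖ := dist_le_norm_add_norm _ _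
              _ ≤ T + T := add_le_add (f_bound x) (f_bound y)
              _ = 2 * T := by ring) with hF
      have hFx : ∀ x, F x = f x := fun x => rfl
      -- pointwise comparisons
      have h1 : ∀ x, occupation T δ x ≤ F x := by
        intro x
        rw [hFx]
        refine integral_mono (ind_int δ x) (g_int x) fun τ => ?_
        by_cases h : x τ ≤ δ
        · simp only [h, if_true]
          exact (g_one _ h).ge
        · simp only [h, if_false]
          exact g_nonneg _
      have h2 : ∀ x, F x ≤ occupation T δ' x := by
        intro x
        rw [hFx]
        refine integral_mono (g_int x) (ind_int δ' x) fun τ => ?_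
        by_cases h : x τ ≤ δ'
        · simp only [h, if_true]
          exact g_le_one _
        · simp only [h, if_false]
          push_neg at h
          exact (g_zero _ h).le
      -- portmanteau
      have hport : Tendsto (fun n => ∫ x, F x ∂(μ n : Measure _)) atTop
          (nhds (∫ x, F x ∂(μ0 : Measure _))) :=
        (ProbabilityMeasure.tendsto_iff_forall_integral_tendsto.mp hconv) F
      have hlim : ∫ x, F x ∂(μ0 : Measure _) ≤ C * δ' := by
        refine le_of_tendsto hport (Eventually.of_forall fun n => ?_)
        calc ∫ x, F x ∂(μ n : Measure _)
            ≤ ∫ x, occupation T δ' x ∂(μ n : Measure _) :=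
              integral_mono (F.integrable _) (occ_int δ' (μ n)) h2
          _ ≤ C * δ' := hbound δ' (hδ.trans hδ') n
      calc ∫ x, occupation T δ x ∂(μ0 : Measure _)
          ≤ ∫ x, F x ∂(μ0 : Measure _) :=
            integral_mono (occ_int δ μ0) (F.integrable _) h1
        _ ≤ C * δ' := hlim
    -- pass to the limit δ' → δ⁺
    have htend : Tendsto (fun δ' : ℝ => C * δ') (nhdsWithin δ (Set.Ioi δ)) (nhds (C * δ)) :=
      ((continuous_const.mul continuous_id).tendsto δ).mono_left nhdsWithin_le_nhds
    exact ge_of_tendsto htend (eventually_mem_nhdsWithin.mono fun δ' hδ' => key δ' hδ')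
  refine ⟨main, ?_⟩
  have htend : Tendsto (fun δ : ℝ => C * δ) (nhdsWithin 0 (Set.Ioi 0)) (nhds 0) := by
    have h : Tendsto (fun δ : ℝ => C * δ) (nhds 0) (nhds (C * 0)) :=
      (continuous_const.mul continuous_id).tendsto 0
    rw [mul_zero] at h
    exact h.mono_left nhdsWithin_le_nhds
  refine squeeze_zero' (eventually_mem_nhdsWithin.mono fun δ hδ => ?_)
    (eventually_mem_nhdsWithin.mono fun δ hδ => main δ hδ) htend
  exact integral_nonneg fun x => occ_nonneg δ x
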